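/- Let F denote the 3×3 real matrix F = [[0, 1, 0], [-1, 0, √10], [0, -√10, -6]]. Then for every t ∈ ℝ, exp(t·F) is the 3×3 matrix whose entries are: (1,1): (5/2)e^{−t} − 2e^{−2t} + (1/2)e^{−3t}; (1,2): (5/2)e^{−t} − 4e^{−2t} + (3/2)e^{−3t}; (1,3): √10·((1/2)e^{−t} − e^{−2t} + (1/2)e^{−3t}); (2,1): −(5/2)e^{−t} + 4e^{−2t} − (3/2)e^{−3t}; (2,2): −(5/2)e^{−t} + 8e^{−2t} − (9/2)e^{−3t}; (2,3): √10·(−(1/2)e^{−t} + 2e^{−2t} − (3/2)e^{−3t}); (3,1): √10·((1/2)e^{−t} − e^{−2t} + (1/2)e^{−3t}); (3,2): √10·((1/2)e^{−t} − 2e^{−2t} + (3/2)e^{−3t}); (3,3): e^{−t} − 5e^{−2t} + 5e^{−3t}. -/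

import Mathlib

open Matrix

set_option maxHeartbeats 1600000 in
/-- The explicit entries of `exp(tF)` for the drift matrix
`F = [[0, 1, 0], [-1, 0, √10], [0, -√10, -6]]` of the third-order Langevin
dynamics with `ξ = 6`, `γ = √10`. -/
theorem exp_smul_hold_drift_entries (t : ℝ) :
    NormedSpace.exp
        (t • (!![0, 1, 0; -1, 0, Real.sqrt 10; 0, -Real.sqrt 10, -6] :
          Matrix (Fin 3) (Fin 3) ℝ))
      = !![(5 / 2) * Real.exp (-t) - 2 * Real.exp (-2 * t) + (1 / 2) * Real.exp (-3 * t),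
            (5 / 2) * Real.exp (-t) - 4 * Real.exp (-2 * t) + (3 / 2) * Real.exp (-3 * t),
            Real.sqrt 10 * ((1 / 2) * Real.exp (-t) - Real.exp (-2 * t) + (1 / 2) * Real.exp (-3 * t));
          -(5 / 2) * Real.exp (-t) + 4 * Real.exp (-2 * t) - (3 / 2) * Real.exp (-3 * t),
            -(5 / 2) * Real.exp (-t) + 8 * Real.exp (-2 * t) - (9 / 2) * Real.exp (-3 * t),
            Real.sqrt 10 * (-(1 / 2) * Real.exp (-t) + 2 * Real.exp (-2 * t) - (3 / 2) * Real.exp (-3 * t));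
          Real.sqrt 10 * ((1 / 2) * Real.exp (-t) - Real.exp (-2 * t) + (1 / 2) * Real.exp (-3 * t)),
            Real.sqrt 10 * ((1 / 2) * Real.exp (-t) - 2 * Real.exp (-2 * t) + (3 / 2) * Real.exp (-3 * t)),
            Real.exp (-t) - 5 * Real.exp (-2 * t) + 5 * Real.exp (-3 * t)] := by
  have hs : Real.sqrt 10 * Real.sqrt 10 = 10 := Real.mul_self_sqrt (by norm_num)
  set s := Real.sqrt 10 with hsdef
  set P : Matrix (Fin 3) (Fin 3) ℝ := !![s, s, s; -s, -2*s, -3*s; 2, 5, 10] with hP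
  set Q : Matrix (Fin 3) (Fin 3) ℝ :=
    !![s/4, s/4, 1/2; -s/5, -(2*s)/5, -1; s/20, 3*s/20, 1/2] with hQ
  have hdiag : ∀ a b c : ℝ, Matrix.diagonal ![a, b, c]
      = !![a, 0, 0; 0, b, 0; 0, 0, c] := by
    intro a b c
    ext i j
    fin_cases i <;> fin_cases j <;>
      simp [Matrix.diagonal_apply, Matrix.vecHead, Matrix.vecTail]
  have hPQ : P * Q = 1 := by
    ext i j
    fin_cases i <;> fin_cases j <;>
      simp [hP, hQ, Matrix.mul_apply, Fin.sum_univ_succ, Matrix.one_apply] <;>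
      nlinarith [hs]
  haveI : Invertible P := invertibleOfRightInverse P Q hPQ
  have hPinv : P⁻¹ = Q := Matrix.inv_eq_right_inv hPQ
  have hU : IsUnit P := isUnit_of_invertible P
  have key : t • (!![0, 1, 0; -1, 0, s; 0, -s, -6] : Matrix (Fin 3) (Fin 3) ℝ)
      = P * Matrix.diagonal ![-t, -2*t, -3*t] * P⁻¹ := by
    rw [hPinv, hdiag]
    ext i j
    fin_cases i <;> fin_cases j <;>
      simp [hP, hQ, Matrix.mul_apply, Fin.sum_univ_succ, Matrix.smul_apply] <;>
      first
        | ring1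
        | linear_combination (t / 10) * hs
        | linear_combination (-(t / 10)) * hs
  have hexp : ∀ x : ℝ, NormedSpace.exp x = Real.exp x := fun x =>
    (congrFun Real.exp_eq_exp_ℝ x).symm
  have hexpv : NormedSpace.exp (![-t, -2*t, -3*t] : Fin 3 → ℝ)
      = ![Real.exp (-t), Real.exp (-2*t), Real.exp (-3*t)] := by
    funext i
    rw [Pi.coe_exp]
    fin_cases i <;> simp [hexp]
  rw [key, Matrix.exp_conj P _ hU, Matrix.exp_diagonal, hexpv, hdiag, hPinv]
  ext i j
  fin_cases i <;> fin_cases j <;>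
    simp [hP, hQ, Matrix.mul_apply, Fin.sum_univ_succ] <;>
    first
      | ring1
      | linear_combination (Real.exp (-t) / 4 - Real.exp (-(2*t)) / 5
          + Real.exp (-(3*t)) / 20) * hs
      | linear_combination (Real.exp (-t) / 4 - 2 * Real.exp (-(2*t)) / 5
          + 3 * Real.exp (-(3*t)) / 20) * hs
      | linear_combination (-(Real.exp (-t) / 4) + 2 * Real.exp (-(2*t)) / 5
          - 3 * Real.exp (-(3*t)) / 20) * hs
      | linear_combination (-(Real.exp (-t) / 4) + 4 * Real.exp (-(2*t)) / 5
          - 9 * Real.exp (-(3*t)) / 20) * hs
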